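/- For 0 < q < p ≤ 1, real α, β with 0 ≤ α ≤ β, n ≥ 1, and x ∈ [0,1], the centered second moment satisfies S_{n,p,q}((t−x)²; x) = ((q[n]_{p,q}[n−1]_{p,q} − [n]_{p,q}² + β²)/([n]_{p,q}+β)²) x² + (([n]_{p,q} p^{n−1} − 2αβ)/([n]_{p,q}+β)²) x + α²/([n]_{p,q}+β)². -/

import Mathlib

open Finset

noncomputable def pqInt (p q : ℝ) (m : ℕ) : ℝ :=
  ∑ i ∈ Finset.range m, p ^ (m - 1 - i) * q ^ i

noncomputable def pqFact (p q : ℝ) (n : ℕ) : ℝ :=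
  ∏ j ∈ Finset.range n, pqInt p q (j + 1)

noncomputable def pqChoose (p q : ℝ) (n k : ℕ) : ℝ :=
  pqFact p q n / (pqFact p q k * pqFact p q (n - k))

noncomputable def pqBasis (p q : ℝ) (n k : ℕ) (x : ℝ) : ℝ :=
  pqChoose p q n k * (p ^ (k * (k - 1) / 2) / p ^ (n * (n - 1) / 2)) * x ^ k *
    ∏ s ∈ Finset.range (n - k), (p ^ s - q ^ s * x)

noncomputable def pqNode (p q α β : ℝ) (n k : ℕ) : ℝ :=
  (p ^ (n - k) * pqInt p q k + α) / (pqInt p q n + β)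

noncomputable def pqStancu (p q α β : ℝ) (n : ℕ) (f : ℝ → ℝ) (x : ℝ) : ℝ :=
  ∑ k ∈ Finset.range (n + 1), pqBasis p q n k x * f (pqNode p q α β n k)

noncomputable def geomS (t : ℝ) (k : ℕ) : ℝ := ∑ i ∈ Finset.range k, t ^ i

lemma pqInt_zero (p q : ℝ) : pqInt p q 0 = 0 := by simp [pqInt]

lemma pqInt_one (p q : ℝ) : pqInt p q 1 = 1 := by simp [pqInt]

lemma pqInt_succ' (p q : ℝ) (m : ℕ) : pqInt p q (m+1) = p^m + q * pqInt p q m := by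
  unfold pqInt
  rw [Finset.sum_range_succ', Finset.mul_sum]
  simp only [Nat.add_sub_cancel, Nat.sub_zero, pow_zero, mul_one]
  rw [add_comm]
  congr 1
  refine Finset.sum_congr rfl fun i hi => ?_
  rw [show m - (i+1) = m - 1 - i from by omega]; ring

lemma pqInt_succ (p q : ℝ) (m : ℕ) : pqInt p q (m+1) = q^m + p * pqInt p q m := by
  unfold pqInt
  rw [Finset.sum_range_succ, Finset.mul_sum]
  simp only [Nat.add_sub_cancel, Nat.sub_self, pow_zero, one_mul]
  rw [add_comm]
  congr 1
  refine Finset.sum_congr rfl fun i hi => ?_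
  have hi' : i < m := Finset.mem_range.mp hi
  rw [show m - i = (m - 1 - i) + 1 from by omega, pow_succ]; ring

lemma pqInt_add (p q : ℝ) (a b : ℕ) :
    pqInt p q (a + b) = p^a * pqInt p q b + q^b * pqInt p q a := by
  induction b with
  | zero => simp [pqInt_zero]
  | succ b ih =>
    rw [show a + (b+1) = (a+b)+1 from rfl, pqInt_succ', ih, pqInt_succ']
    rw [pow_add, pow_succ]
    ring

lemma pqInt_pos {p q : ℝ} (hp : 0 < p) (hq : 0 < q) (m : ℕ) : 0 < pqInt p q (m+1) := by
  induction m with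
  | zero => simp [pqInt_one]
  | succ m ih =>
    rw [pqInt_succ']
    exact add_pos (pow_pos hp _) (mul_pos hq ih)

lemma pqFact_pos {p q : ℝ} (hp : 0 < p) (hq : 0 < q) (n : ℕ) : 0 < pqFact p q n :=
  Finset.prod_pos fun j _ => pqInt_pos hp hq j

lemma pqFact_succ (p q : ℝ) (n : ℕ) : pqFact p q (n+1) = pqFact p q n * pqInt p q (n+1) :=
  Finset.prod_range_succ _ _

lemma pascal {p q : ℝ} (hp : 0 < p) (hq : 0 < q) (k d : ℕ) :
    pqChoose p q (k+d+2) (k+1) =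
      p^(k+1) * pqChoose p q (k+d+1) (k+1) + q^(d+1) * pqChoose p q (k+d+1) k := by
  unfold pqChoose
  rw [show k+d+2 - (k+1) = d+1 from by omega, show k+d+1 - (k+1) = d from by omega,
    show k+d+1 - k = d+1 from by omega,
    show k+d+2 = (k+d+1)+1 from rfl, pqFact_succ p q (k+d+1),
    show (k:ℕ)+d+1+1 = (k+1)+(d+1) from by omega,
    pqInt_add p q (k+1) (d+1),
    pqFact_succ p q k, pqFact_succ p q d]
  have h1 := (pqFact_pos hp hq k).ne'
  have h2 := (pqFact_pos hp hq d).ne'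
  have h3 := (pqInt_pos hp hq k).ne'
  have h4 := (pqInt_pos hp hq d).ne'
  field_simp

lemma tri (n : ℕ) : (n+1)*n/2 = n*(n-1)/2 + n := by
  cases n with
  | zero => rfl
  | succ m =>
    rw [show (m+1+1)*(m+1) = (m+1)*m + (m+1)*2 from by ring,
      Nat.add_mul_div_right _ _ (by norm_num : (0:ℕ) < 2)]
    simp

lemma pow_tri (p : ℝ) (n : ℕ) : p ^ ((n+1)*n/2) = p ^ (n*(n-1)/2) * p ^ n := by
  rw [tri, pow_add]

lemma pqFact_zero (p q : ℝ) : pqFact p q 0 = 1 := by simp [pqFact]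

lemma basis_diag {p q : ℝ} (hp : 0 < p) (hq : 0 < q) (n : ℕ) (x : ℝ) :
    pqBasis p q n n x = x ^ n := by
  unfold pqBasis pqChoose
  rw [Nat.sub_self, pqFact_zero, mul_one, div_self (pqFact_pos hp hq n).ne',
    div_self (pow_ne_zero _ hp.ne')]
  simp

lemma basis_zero_succ {p q : ℝ} (hp : 0 < p) (hq : 0 < q) (n : ℕ) (x : ℝ) :
    pqBasis p q (n+1) 0 x = (1 - (q/p)^n * x) * pqBasis p q n 0 x := by
  unfold pqBasis pqChoose
  rw [Nat.sub_zero, Nat.sub_zero, pqFact_zero, one_mul, one_mul,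
    div_self (pqFact_pos hp hq (n+1)).ne', div_self (pqFact_pos hp hq n).ne']
  rw [Nat.add_sub_cancel, pow_tri, Finset.prod_range_succ]
  rw [div_pow]
  have h1 : (p:ℝ) ^ (n*(n-1)/2) ≠ 0 := pow_ne_zero _ hp.ne'
  have h2 : (p:ℝ) ^ n ≠ 0 := pow_ne_zero _ hp.ne'
  field_simp
  ring

lemma tri' (n : ℕ) : (n+2)*(n+1)/2 = (n+1)*n/2 + (n+1) := by
  have h := tri (n+1); simpa using h

lemma basis_pascal {p q : ℝ} (hp : 0 < p) (hq : 0 < q) (k d : ℕ) (x : ℝ) :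
    pqBasis p q (k+d+2) (k+1) x =
      (q/p)^(d+1) * x * pqBasis p q (k+d+1) k x +
      (1 - (q/p)^d * x) * pqBasis p q (k+d+1) (k+1) x := by
  unfold pqBasis
  rw [pascal hp hq k d,
    show k+d+2 - (k+1) = d+1 from by omega, show k+d+1 - (k+1) = d from by omega,
    show k+d+1 - k = d+1 from by omega,
    Nat.add_sub_cancel,
    show k+d+2-1 = (k+d)+1 from by omega, show k+d+1-1 = k+d from by omega,
    show (k+d+2)*((k+d)+1)/2 = (k+d+1)*(k+d)/2 + (k+d+1) from tri' (k+d),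
    show (k+1)*k/2 = k*(k-1)/2 + k from tri k,
    pow_add, pow_add, Finset.prod_range_succ]
  have h1 : (p:ℝ) ^ (k*(k-1)/2) ≠ 0 := pow_ne_zero _ hp.ne'
  have h2 : (p:ℝ) ^ ((k+d+1)*(k+d)/2) ≠ 0 := pow_ne_zero _ hp.ne'
  have h3 : (p:ℝ) ≠ 0 := hp.ne'
  rw [div_pow, div_pow]
  field_simp
  ring

lemma sum_rec {p q : ℝ} (hp : 0 < p) (hq : 0 < q) (n : ℕ) (x : ℝ) (f : ℕ → ℝ) :
    ∑ k ∈ Finset.range (n+2), pqBasis p q (n+1) k x * f k =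
    ∑ j ∈ Finset.range (n+1), pqBasis p q n j x *
      ((1 - (q/p)^(n-j) * x) * f j + (q/p)^(n-j) * x * f (j+1)) := by
  rw [Finset.sum_range_succ']
  have hsplit : ∀ j ∈ Finset.range (n+1), pqBasis p q n j x *
      ((1 - (q/p)^(n-j) * x) * f j + (q/p)^(n-j) * x * f (j+1))
      = pqBasis p q n j x * (1 - (q/p)^(n-j) * x) * f j
        + pqBasis p q n j x * (q/p)^(n-j) * x * f (j+1) := by
    intro j _; ring
  rw [Finset.sum_congr rfl hsplit, Finset.sum_add_distrib]
  -- first RHS piece: peel off j = 0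
  rw [Finset.sum_range_succ' (fun j => pqBasis p q n j x * (1 - (q/p)^(n-j) * x) * f j) n]
  -- second RHS piece and LHS main: peel off top index
  rw [Finset.sum_range_succ (fun j => pqBasis p q n j x * (q/p)^(n-j) * x * f (j+1)) n]
  rw [Finset.sum_range_succ (fun i => pqBasis p q (n+1) (i+1) x * f (i+1)) n]
  have hdiag : pqBasis p q (n+1) (n+1) x * f (n+1)
      = pqBasis p q n n x * (q/p)^(n-n) * x * f (n+1) := by
    rw [basis_diag hp hq, basis_diag hp hq, Nat.sub_self]
    ring
  have hzero : pqBasis p q (n+1) 0 x * f 0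
      = pqBasis p q n 0 x * (1 - (q/p)^(n-0) * x) * f 0 := by
    rw [basis_zero_succ hp hq, Nat.sub_zero]; ring
  have hmid : ∀ i ∈ Finset.range n, pqBasis p q (n+1) (i+1) x * f (i+1)
      = pqBasis p q n (i+1) x * (1 - (q/p)^(n-(i+1)) * x) * f (i+1)
        + pqBasis p q n i x * (q/p)^(n-i) * x * f (i+1) := by
    intro i hi
    have hi' : i < n := Finset.mem_range.mp hi
    obtain ⟨d, rfl⟩ : ∃ d, n = i + d + 1 := ⟨n - i - 1, by omega⟩
    rw [show i+d+1+1 = i+d+2 from rfl, basis_pascal hp hq i d,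
      show i+d+1 - (i+1) = d from by omega, show i+d+1-i = d+1 from by omega]
    ring
  rw [Finset.sum_congr rfl hmid, Finset.sum_add_distrib, hdiag, hzero]
  ring

lemma M0 {p q : ℝ} (hp : 0 < p) (hq : 0 < q) (x : ℝ) (n : ℕ) :
    ∑ k ∈ Finset.range (n+1), pqBasis p q n k x = 1 := by
  induction n with
  | zero => simp [pqBasis, pqChoose, pqFact_zero]
  | succ n ih =>
    have h := sum_rec hp hq n x (fun _ => 1)
    simp only [mul_one] at h
    rw [h]
    have hpt : ∀ j ∈ Finset.range (n+1),
        pqBasis p q n j x * (1 - (q/p)^(n-j)*x + (q/p)^(n-j)*x) = pqBasis p q n j x := by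
      intro j _; ring
    rw [Finset.sum_congr rfl hpt, ih]

lemma M1 {p q : ℝ} (hp : 0 < p) (hq : 0 < q) (x : ℝ) (n : ℕ) :
    ∑ k ∈ Finset.range (n+1), pqBasis p q n k x * geomS (q/p) k
      = geomS (q/p) n * x := by
  induction n with
  | zero => simp [geomS]
  | succ n ih =>
    rw [sum_rec hp hq n x (fun k => geomS (q/p) k)]
    have hpt : ∀ j ∈ Finset.range (n+1), pqBasis p q n j x *
        ((1 - (q/p)^(n-j) * x) * geomS (q/p) j + (q/p)^(n-j) * x * geomS (q/p) (j+1))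
        = pqBasis p q n j x * geomS (q/p) j + (q/p)^n * x * pqBasis p q n j x := by
      intro j hj
      have hj' : j ≤ n := by have := Finset.mem_range.mp hj; omega
      have hpow : (q/p)^(n-j) * (q/p)^j = (q/p)^n := by
        rw [← pow_add, Nat.sub_add_cancel hj']
      have hG : geomS (q/p) (j+1) = geomS (q/p) j + (q/p)^j := by
        simp [geomS, Finset.sum_range_succ]
      rw [hG]
      linear_combination (pqBasis p q n j x * x) * hpow
    rw [Finset.sum_congr rfl hpt, Finset.sum_add_distrib, ih, ← Finset.mul_sum, M0 hp hq,
      show geomS (q/p) (n+1) = geomS (q/p) n + (q/p)^n from by simp [geomS, Finset.sum_range_succ]]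
    ring

lemma Usum {p q : ℝ} (hp : 0 < p) (hq : 0 < q) (x : ℝ) (n : ℕ) :
    ∑ k ∈ Finset.range (n+1), pqBasis p q n k x * (q/p)^k
      = 1 + (q/p - 1) * (geomS (q/p) n * x) := by
  have hpt : ∀ k ∈ Finset.range (n+1), pqBasis p q n k x * (q/p)^k
      = pqBasis p q n k x + (q/p - 1) * (pqBasis p q n k x * geomS (q/p) k) := by
    intro k _
    have h := geom_sum_mul (q/p) k
    have h' : (q/p)^k = 1 + (q/p - 1) * geomS (q/p) k := by
      rw [geomS]; linear_combination -h
    rw [h']; ring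
  rw [Finset.sum_congr rfl hpt, Finset.sum_add_distrib, ← Finset.mul_sum, M0 hp hq,
    M1 hp hq]

lemma M2 {p q : ℝ} (hp : 0 < p) (hq : 0 < q) (x : ℝ) (n : ℕ) :
    ∑ k ∈ Finset.range (n+1), pqBasis p q n k x * (geomS (q/p) k)^2
      = geomS (q/p) n * x + geomS (q/p) n * (geomS (q/p) n - 1) * x^2 := by
  induction n with
  | zero => simp [geomS]
  | succ n ih =>
    rw [sum_rec hp hq n x (fun k => (geomS (q/p) k)^2)]
    have hpt : ∀ j ∈ Finset.range (n+1), pqBasis p q n j x *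
        ((1 - (q/p)^(n-j) * x) * (geomS (q/p) j)^2 + (q/p)^(n-j) * x * (geomS (q/p) (j+1))^2)
        = pqBasis p q n j x * (geomS (q/p) j)^2
          + 2 * (q/p)^n * x * (pqBasis p q n j x * geomS (q/p) j)
          + (q/p)^n * x * (pqBasis p q n j x * (q/p)^j) := by
      intro j hj
      have hj' : j ≤ n := by have := Finset.mem_range.mp hj; omega
      have hpow : (q/p)^(n-j) * (q/p)^j = (q/p)^n := by
        rw [← pow_add, Nat.sub_add_cancel hj']
      have hG : geomS (q/p) (j+1) = geomS (q/p) j + (q/p)^j := by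
        simp [geomS, Finset.sum_range_succ]
      rw [hG]
      linear_combination (pqBasis p q n j x * x * (2 * geomS (q/p) j + (q/p)^j)) * hpow
    rw [Finset.sum_congr rfl hpt, Finset.sum_add_distrib, Finset.sum_add_distrib,
      ih, ← Finset.mul_sum, ← Finset.mul_sum, M1 hp hq, Usum hp hq]
    have hG : geomS (q/p) (n+1) = geomS (q/p) n + (q/p)^n := by
      simp [geomS, Finset.sum_range_succ]
    have hrel : (q/p) * geomS (q/p) n = geomS (q/p) n + (q/p)^n - 1 := by
      have h := geom_sum_mul (q/p) n
      rw [geomS]; linear_combination h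
    rw [hG]
    linear_combination ((q/p)^n * x^2) * hrel

lemma pqInt_eq_geom {p : ℝ} (hp : p ≠ 0) (q : ℝ) (k : ℕ) :
    pqInt p q (k+1) = p^k * geomS (q/p) (k+1) := by
  unfold pqInt geomS
  rw [Finset.mul_sum]
  refine Finset.sum_congr rfl fun i hi => ?_
  have hi' : i ≤ k := by have := Finset.mem_range.mp hi; omega
  rw [show k+1-1-i = k-i from by omega, div_pow]
  have hpi : (p:ℝ)^i ≠ 0 := pow_ne_zero _ hp
  have hsplit : (p:ℝ)^(k-i) * p^i = p^k := by rw [← pow_add]; congr 1; omega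
  field_simp
  linear_combination (q^i) * hsplit

lemma node_eq {p : ℝ} (hp : p ≠ 0) (q : ℝ) (m k : ℕ) (hk : k ≤ m+1) :
    p^(m+1-k) * pqInt p q k = p^m * geomS (q/p) k := by
  cases k with
  | zero => simp [pqInt_zero, geomS]
  | succ j =>
    rw [pqInt_eq_geom hp, show m+1-(j+1) = m-j from by omega, ← mul_assoc, ← pow_add]
    congr 2
    omega

theorem pqStancu_centered_sq' (p q α β x : ℝ) (hq : 0 < q) (hqp : q < p) (hp : p ≤ 1)
    (hα : 0 ≤ α) (hαβ : α ≤ β) (n : ℕ) (hn : 1 ≤ n) (hx : x ∈ Set.Icc (0 : ℝ) 1) :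
    (∑ k ∈ Finset.range (n + 1), pqBasis p q n k x *
      (((p ^ (n - k) * pqInt p q k + α) / (pqInt p q n + β) - x) ^ 2)) =
      ((q * pqInt p q n * pqInt p q (n - 1) - pqInt p q n ^ 2 + β ^ 2) /
          (pqInt p q n + β) ^ 2) * x ^ 2 +
        ((pqInt p q n * p ^ (n - 1) - 2 * α * β) / (pqInt p q n + β) ^ 2) * x +
        α ^ 2 / (pqInt p q n + β) ^ 2 := by
  obtain ⟨m, rfl⟩ : ∃ m, n = m + 1 := ⟨n - 1, by omega⟩
  have hp0 : 0 < p := hq.trans hqp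
  have hN : 0 < pqInt p q (m+1) := pqInt_pos hp0 hq m
  have hβ : 0 ≤ β := hα.trans hαβ
  have hD : pqInt p q (m+1) + β ≠ 0 := by linarith
  have key : ∀ k ∈ Finset.range (m+2),
      pqBasis p q (m+1) k x * (((p ^ (m+1-k) * pqInt p q k + α) / (pqInt p q (m+1) + β) - x) ^ 2)
      = (pqBasis p q (m+1) k x * (geomS (q/p) k)^2 * (p^m*p^m)
         + (2*(α - (pqInt p q (m+1)+β)*x)*p^m) * (pqBasis p q (m+1) k x * geomS (q/p) k)
         + (α - (pqInt p q (m+1)+β)*x)^2 * pqBasis p q (m+1) k x) / (pqInt p q (m+1)+β)^2 := by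
    intro k hk
    have hk' : k ≤ m+1 := by have := Finset.mem_range.mp hk; omega
    rw [node_eq hp0.ne' q m k hk']
    field_simp
    ring
  rw [show m+1+1 = m+2 from rfl, Finset.sum_congr rfl key, ← Finset.sum_div,
    Finset.sum_add_distrib, Finset.sum_add_distrib,
    ← Finset.sum_mul, ← Finset.mul_sum, ← Finset.mul_sum,
    M2 hp0 hq, M1 hp0 hq, M0 hp0 hq,
    show m+1-1 = m from by omega]
  have hNG : pqInt p q (m+1) = p^m * geomS (q/p) (m+1) := pqInt_eq_geom hp0.ne' q m
  have hq' : q * pqInt p q m = p^m * geomS (q/p) (m+1) - p^m := by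
    have h2 := pqInt_succ' p q m
    linear_combination hNG - h2
  rw [hNG]
  rw [div_mul_eq_mul_div, div_mul_eq_mul_div, ← add_div, ← add_div]
  congr 1
  linear_combination (-(p^m * geomS (q/p) (m+1) * x^2)) * hq'


theorem pqStancu_centered_sq (p q α β x : ℝ) (hq : 0 < q) (hqp : q < p) (hp : p ≤ 1)
    (hα : 0 ≤ α) (hαβ : α ≤ β) (n : ℕ) (hn : 1 ≤ n) (hx : x ∈ Set.Icc (0 : ℝ) 1) :
    pqStancu p q α β n (fun t => (t - x) ^ 2) x =
      ((q * pqInt p q n * pqInt p q (n - 1) - pqInt p q n ^ 2 + β ^ 2) /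
          (pqInt p q n + β) ^ 2) * x ^ 2 +
        ((pqInt p q n * p ^ (n - 1) - 2 * α * β) / (pqInt p q n + β) ^ 2) * x +
        α ^ 2 / (pqInt p q n + β) ^ 2 := by
  have h := pqStancu_centered_sq' p q α β x hq hqp hp hα hαβ n hn hx
  simpa [pqStancu, pqNode] using h
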